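/- Let F₀ be the truncated exponential CDF on [0,2] and θ the score function of Example 1 (closed-form on [0,3]). Then ∫_0^3 θ(x)² (F₀(x) − F₀(x−1)) dx has an explicit closed form in e, whose numerical value is approximately 0.357915. -/

import Mathlib

open Real

lemma aux_hasDeriv (a b c d x : ℝ) :
    HasDerivAt (fun t : ℝ => a*t - b*exp (-t) - c/2*exp (-(2*t)) - d/3*exp (-(3*t)))
      (a + b*exp (-x) + c*exp (-(2*x)) + d*exp (-(3*x))) x := by
  have h1 : HasDerivAt (fun t : ℝ => exp (-t)) (-exp (-x)) x := by
    simpa [Function.comp_def] using (Real.hasDerivAt_exp (-x)).comp x ((hasDerivAt_id x).neg)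
  have h2 : HasDerivAt (fun t : ℝ => exp (-(2*t))) (-2 * exp (-(2*x))) x := by
    have h := (Real.hasDerivAt_exp (-(2*x))).comp x (((hasDerivAt_id x).const_mul (2:ℝ)).neg)
    simp only [Function.comp_def, mul_one] at h
    exact h.congr_deriv (by ring)
  have h3 : HasDerivAt (fun t : ℝ => exp (-(3*t))) (-3 * exp (-(3*x))) x := by
    have h := (Real.hasDerivAt_exp (-(3*x))).comp x (((hasDerivAt_id x).const_mul (3:ℝ)).neg)
    simp only [Function.comp_def, mul_one] at h
    exact h.congr_deriv (by ring)
  have := ((((hasDerivAt_id x).const_mul a).sub (h1.const_mul b)).sub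
      (h2.const_mul (c/2))).sub (h3.const_mul (d/3))
  exact this.congr_deriv (by ring)

lemma aux_integ (a b c d p q : ℝ) :
    (∫ x in p..q, (a + b*exp (-x) + c*exp (-(2*x)) + d*exp (-(3*x)))) =
      (a*q - b*exp (-q) - c/2*exp (-(2*q)) - d/3*exp (-(3*q)))
      - (a*p - b*exp (-p) - c/2*exp (-(2*p)) - d/3*exp (-(3*p))) := by
  refine intervalIntegral.integral_eq_sub_of_hasDerivAt (fun x _ => aux_hasDeriv a b c d x) ?_
  apply Continuous.intervalIntegrable
  fun_prop

lemma aux_intable {f : ℝ → ℝ} (a b c d p q : ℝ)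
    (h : Set.EqOn f (fun x : ℝ => a + b*exp (-x) + c*exp (-(2*x)) + d*exp (-(3*x)))
      (Set.uIcc p q)) : IntervalIntegrable f MeasureTheory.volume p q := by
  have hc : Continuous (fun x : ℝ => a + b*exp (-x) + c*exp (-(2*x)) + d*exp (-(3*x))) := by
    fun_prop
  refine (hc.intervalIntegrable p q).congr ?_
  intro x hx
  exact (h (Set.uIoc_subset_uIcc hx)).symm


set_option maxHeartbeats 1000000 in
lemma aux_num (E : ℝ) (hlo : (2.7182818283:ℝ) < E) (hhi : E < (2.7182818286:ℝ)) :
    |(1/2 + E + 7/2*E^2 - 2*E^3 - 9/2*E^4 + E^5 + 1/2*E^6)/((E^2-1)^3) - 0.357915| < 1e-5 := by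
  have hp2 : (0:ℝ) < E^2 := by nlinarith
  have hp4 : (0:ℝ) < E^4 := by nlinarith
  have p2l : (7.3890560980:ℝ) < E^2 := by nlinarith
  have p2u : E^2 < (7.3890560997:ℝ) := by nlinarith
  have p3l : (20.0855369196:ℝ) < E^3 := by
    nlinarith [mul_lt_mul_of_pos_left hlo hp2, p2l]
  have p3u : E^3 < (20.0855369264:ℝ) := by
    nlinarith [mul_lt_mul_of_pos_left hhi hp2, p2u]
  have p4l : (54.5981500203:ℝ) < E^4 := by
    nlinarith [p2l, sq_nonneg (E^2 - (7.3890560980:ℝ))]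
  have p4u : E^4 < (54.5981500445:ℝ) := by
    nlinarith [mul_lt_mul_of_pos_left p2u hp2, p2u]
  have p5l : (148.4131590591:ℝ) < E^5 := by
    nlinarith [mul_lt_mul_of_pos_left hlo hp4, p4l]
  have p5u : E^5 < (148.4131591411:ℝ) := by
    nlinarith [mul_lt_mul_of_pos_left hhi hp4, p4u]
  have p6l : (403.4287933511:ℝ) < E^6 := by
    nlinarith [mul_lt_mul_of_pos_left p2l hp4, p4l]
  have p6u : E^6 < (403.4287936183:ℝ) := by
    nlinarith [mul_lt_mul_of_pos_left p2u hp4, p4u]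
  have hKpos : (0:ℝ) < (E^2-1)^3 := by nlinarith
  rw [abs_lt]
  constructor
  · have h2' : (0.357915 - 1e-5 : ℝ)
        < (1/2 + E + 7/2*E^2 - 2*E^3 - 9/2*E^4 + E^5 + 1/2*E^6)/((E^2-1)^3) := by
      rw [lt_div_iff₀ hKpos]
      ring_nf
      linarith [p2l, p2u, p3l, p3u, p4l, p4u, p5l, p5u, p6l, p6u, hlo, hhi]
    linarith
  · have h2' : (1/2 + E + 7/2*E^2 - 2*E^3 - 9/2*E^4 + E^5 + 1/2*E^6)/((E^2-1)^3)
        < (0.357915 + 1e-5 : ℝ) := by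
      rw [div_lt_iff₀ hKpos]
      ring_nf
      linarith [p2l, p2u, p3l, p3u, p4l, p4u, p5l, p5u, p6l, p6u, hlo, hhi]
    linarith

set_option maxHeartbeats 1000000 in
theorem stmt_13 (F₀ θ : ℝ → ℝ)
    (hF₀mid : ∀ x ∈ Set.Icc (0 : ℝ) 2, F₀ x = (1 - exp (-x)) / (1 - exp (-2)))
    (hF₀hi : ∀ x : ℝ, 2 < x → F₀ x = 1)
    (hF₀lo : ∀ x : ℝ, x < 0 → F₀ x = 0)
    (hθ1 : ∀ x ∈ Set.Icc (0 : ℝ) 1,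
      θ x = (2 * exp x - exp 1 * (1 + exp 1)) / ((exp 1 ^ 2 - 1) * exp x))
    (hθ2 : ∀ x ∈ Set.Ioc (1 : ℝ) 2,
      θ x = ((1 + exp 1 ^ 2) * exp x - exp 1 ^ 2 * (1 + exp 1)) / ((exp 1 ^ 2 - 1) * exp x))
    (hθ3 : ∀ x ∈ Set.Ioc (2 : ℝ) 3,
      θ x = (2 * exp 1 ^ 2 - (1 + exp 1) * exp (3 - x)) / (exp 1 ^ 2 - 1)) :
    |(∫ x in (0 : ℝ)..3, θ x ^ 2 * (F₀ x - F₀ (x - 1))) - 0.357915| < 1e-5 := by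
  have hE1 : (1:ℝ) < exp 1 := by nlinarith [exp_one_gt_d9]
  have hE0 : exp 1 ≠ 0 := (exp_pos 1).ne'
  have hK0 : (0:ℝ) < exp 1 ^ 2 - 1 := by nlinarith
  have hK : exp 1 ^ 2 - 1 ≠ 0 := hK0.ne'
  have ek : ∀ n : ℕ, exp (-(n:ℝ)) = (exp 1 ^ n)⁻¹ := fun n => by
    rw [exp_neg, ← Real.exp_nat_mul, mul_one]
  have e2 : exp (-2:ℝ) = (exp 1 ^ 2)⁻¹ := by have := ek 2; push_cast at this; exact this
  have e3 : exp (-3:ℝ) = (exp 1 ^ 3)⁻¹ := by have := ek 3; push_cast at this; exact this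
  have e4 : exp (-4:ℝ) = (exp 1 ^ 4)⁻¹ := by have := ek 4; push_cast at this; exact this
  have e6 : exp (-6:ℝ) = (exp 1 ^ 6)⁻¹ := by have := ek 6; push_cast at this; exact this
  have e9 : exp (-9:ℝ) = (exp 1 ^ 9)⁻¹ := by have := ek 9; push_cast at this; exact this
  have e1' : exp (-1:ℝ) = (exp 1)⁻¹ := exp_neg 1
  have hone2 : (1:ℝ) - exp (-2) ≠ 0 := by
    rw [e2]
    have h1 : (1:ℝ) < exp 1 ^ 2 := by nlinarith
    have := inv_lt_one_of_one_lt₀ h1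
    linarith
  set E := exp 1 with hEdef
  set K := (E^2 - 1)^3 with hKdef
  have hKpos : (0:ℝ) < K := by positivity
  obtain ⟨a1, ha1⟩ : ∃ t : ℝ, t = 4*E^2/K := ⟨_, rfl⟩
  obtain ⟨b1, hb1⟩ : ∃ t : ℝ, t = -(4*E^2*(1+E+E^2))/K := ⟨_, rfl⟩
  obtain ⟨c1, hc1⟩ : ∃ t : ℝ, t = E^2*(4*(E+E^2)+(E+E^2)^2)/K := ⟨_, rfl⟩
  obtain ⟨d1, hd1⟩ : ∃ t : ℝ, t = -(E^2*(E+E^2)^2)/K := ⟨_, rfl⟩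
  obtain ⟨a2, ha2⟩ : ∃ t : ℝ, t = (0:ℝ) := ⟨_, rfl⟩
  obtain ⟨b2, hb2⟩ : ∃ t : ℝ, t = E^2*(E-1)*(1+E^2)^2/K := ⟨_, rfl⟩
  obtain ⟨c2, hc2⟩ : ∃ t : ℝ, t = -(2*E^2*(E-1)*(E^2+E^3)*(1+E^2))/K := ⟨_, rfl⟩
  obtain ⟨d2, hd2⟩ : ∃ t : ℝ, t = E^2*(E-1)*(E^2+E^3)^2/K := ⟨_, rfl⟩
  obtain ⟨a3, ha3⟩ : ∃ t : ℝ, t = -(4*E^4)/K := ⟨_, rfl⟩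
  obtain ⟨b3, hb3⟩ : ∃ t : ℝ, t = (4*E^5*(1+E)+4*E^7)/K := ⟨_, rfl⟩
  obtain ⟨c3, hc3⟩ : ∃ t : ℝ, t = -((1+E)^2*E^6+4*E^8*(1+E))/K := ⟨_, rfl⟩
  obtain ⟨d3, hd3⟩ : ∃ t : ℝ, t = (1+E)^2*E^9/K := ⟨_, rfl⟩
  -- piece 1
  have key1 : Set.EqOn (fun x => θ x ^ 2 * (F₀ x - F₀ (x - 1)))
      (fun x : ℝ => a1 + b1*exp (-x) + c1*exp (-(2*x)) + d1*exp (-(3*x)))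
      (Set.uIcc (0:ℝ) 1) := by
    intro x hx
    rw [Set.uIcc_of_le (by norm_num : (0:ℝ) ≤ 1)] at hx
    obtain ⟨hx0, hx1⟩ := hx
    have hFx : F₀ x = (1 - exp (-x)) / (1 - exp (-2)) := hF₀mid x ⟨hx0, by linarith⟩
    have hF' : F₀ (x - 1) = 0 := by
      rcases lt_or_eq_of_le hx1 with h | h
      · exact hF₀lo _ (by linarith)
      · rw [h, show (1:ℝ) - 1 = 0 by norm_num, hF₀mid 0 ⟨le_refl 0, by norm_num⟩]
        simp
    simp only
    rw [hθ1 x ⟨hx0, hx1⟩, hFx, hF']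
    have hxne : exp x ≠ 0 := (exp_pos x).ne'
    have h2x : exp (-(2*x)) = (exp x)⁻¹ * (exp x)⁻¹ := by
      rw [show -(2*x) = -x + -x by ring, exp_add, exp_neg]
    have h3x : exp (-(3*x)) = (exp x)⁻¹ * (exp x)⁻¹ * (exp x)⁻¹ := by
      rw [show -(3*x) = -x + -x + -x by ring, exp_add, exp_add, exp_neg]
    rw [exp_neg, h2x, h3x, e2, ha1, hb1, hc1, hd1, hKdef]
    field_simp
    ring
  -- piece 2
  have key2 : Set.EqOn (fun x => θ x ^ 2 * (F₀ x - F₀ (x - 1)))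
      (fun x : ℝ => a2 + b2*exp (-x) + c2*exp (-(2*x)) + d2*exp (-(3*x)))
      (Set.uIcc (1:ℝ) 2) := by
    intro x hx
    rw [Set.uIcc_of_le (by norm_num : (1:ℝ) ≤ 2)] at hx
    obtain ⟨hx0, hx1⟩ := hx
    have hFx : F₀ x = (1 - exp (-x)) / (1 - exp (-2)) := hF₀mid x ⟨by linarith, hx1⟩
    have hF' : F₀ (x - 1) = (1 - exp (-(x-1))) / (1 - exp (-2)) :=
      hF₀mid (x-1) ⟨by linarith, by linarith⟩
    have hθx : θ x = ((1 + E ^ 2) * exp x - E ^ 2 * (1 + E)) / ((E ^ 2 - 1) * exp x) := by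
      rcases lt_or_eq_of_le hx0 with h | h
      · exact hθ2 x ⟨h, hx1⟩
      · have hden : (E^2-1)*exp 1 ≠ 0 := mul_ne_zero hK hE0
        rw [← h, hθ1 1 ⟨by norm_num, le_refl 1⟩, div_eq_div_iff hden hden]
        ring
    simp only
    rw [hθx, hFx, hF']
    have hxne : exp x ≠ 0 := (exp_pos x).ne'
    have h2x : exp (-(2*x)) = (exp x)⁻¹ * (exp x)⁻¹ := by
      rw [show -(2*x) = -x + -x by ring, exp_add, exp_neg]
    have h3x : exp (-(3*x)) = (exp x)⁻¹ * (exp x)⁻¹ * (exp x)⁻¹ := by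
      rw [show -(3*x) = -x + -x + -x by ring, exp_add, exp_add, exp_neg]
    have hx1' : exp (-(x-1)) = E * (exp x)⁻¹ := by
      rw [show -(x-1) = 1 + -x by ring, exp_add, exp_neg, hEdef]
    rw [exp_neg, h2x, h3x, hx1', e2, ha2, hb2, hc2, hd2, hKdef]
    field_simp
    ring
  -- piece 3
  have key3 : Set.EqOn (fun x => θ x ^ 2 * (F₀ x - F₀ (x - 1)))
      (fun x : ℝ => a3 + b3*exp (-x) + c3*exp (-(2*x)) + d3*exp (-(3*x)))
      (Set.uIcc (2:ℝ) 3) := by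
    intro x hx
    rw [Set.uIcc_of_le (by norm_num : (2:ℝ) ≤ 3)] at hx
    obtain ⟨hx0, hx1⟩ := hx
    have hFx : F₀ x = 1 := by
      rcases lt_or_eq_of_le hx0 with h | h
      · exact hF₀hi x h
      · rw [← h, hF₀mid 2 ⟨by norm_num, le_refl 2⟩, div_self hone2]
    have hF' : F₀ (x - 1) = (1 - exp (-(x-1))) / (1 - exp (-2)) :=
      hF₀mid (x-1) ⟨by linarith, by linarith⟩
    have hexp2 : exp (2:ℝ) = E^2 := by
      rw [show (2:ℝ) = 1 + 1 by norm_num, exp_add, hEdef]; ring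
    have h3mx : exp (3-x) = E^3 * (exp x)⁻¹ := by
      rw [show (3:ℝ)-x = 1 + 1 + 1 + -x by ring, exp_add, exp_add, exp_add, exp_neg, hEdef]
      ring
    have hθx : θ x = (2 * E ^ 2 - (1 + E) * exp (3 - x)) / (E ^ 2 - 1) := by
      rcases lt_or_eq_of_le hx0 with h | h
      · exact hθ3 x ⟨h, hx1⟩
      · have hden : (E^2-1)*E^2 ≠ 0 := mul_ne_zero hK (pow_ne_zero 2 hE0)
        rw [← h, hθ2 2 ⟨by norm_num, le_refl 2⟩, show (3:ℝ) - 2 = 1 by norm_num, hexp2,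
          div_eq_div_iff hden hK]
        ring
    simp only
    rw [hθx, hFx, hF']
    have hxne : exp x ≠ 0 := (exp_pos x).ne'
    have h2x : exp (-(2*x)) = (exp x)⁻¹ * (exp x)⁻¹ := by
      rw [show -(2*x) = -x + -x by ring, exp_add, exp_neg]
    have h3x : exp (-(3*x)) = (exp x)⁻¹ * (exp x)⁻¹ * (exp x)⁻¹ := by
      rw [show -(3*x) = -x + -x + -x by ring, exp_add, exp_add, exp_neg]
    have hx1' : exp (-(x-1)) = E * (exp x)⁻¹ := by
      rw [show -(x-1) = 1 + -x by ring, exp_add, exp_neg, hEdef]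
    rw [h3mx, hx1', e2, h2x, h3x, exp_neg, ha3, hb3, hc3, hd3, hKdef]
    field_simp
    ring
  -- integrability
  have i1 := aux_intable a1 b1 c1 d1 0 1 key1
  have i2 := aux_intable a2 b2 c2 d2 1 2 key2
  have i3 := aux_intable a3 b3 c3 d3 2 3 key3
  have hsplit : (∫ x in (0:ℝ)..3, θ x ^ 2 * (F₀ x - F₀ (x - 1))) =
      (∫ x in (0:ℝ)..1, θ x ^ 2 * (F₀ x - F₀ (x - 1)))
      + ((∫ x in (1:ℝ)..2, θ x ^ 2 * (F₀ x - F₀ (x - 1)))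
      + (∫ x in (2:ℝ)..3, θ x ^ 2 * (F₀ x - F₀ (x - 1)))) := by
    rw [intervalIntegral.integral_add_adjacent_intervals i2 i3,
        intervalIntegral.integral_add_adjacent_intervals i1 (i2.trans i3)]
  -- values
  have v1 : (∫ x in (0:ℝ)..1, θ x ^ 2 * (F₀ x - F₀ (x - 1)))
      = (7/3*E + 13/6*E^2 + 4/3*E^3 - 7/3*E^4 + 1/3*E^5 + 1/6*E^6)/K := by
    rw [intervalIntegral.integral_congr key1, aux_integ]
    norm_num [Real.exp_zero]
    rw [e1', e2, e3, ha1, hb1, hc1, hd1, hKdef]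
    field_simp
    ring
  have v2 : (∫ x in (1:ℝ)..2, θ x ^ 2 * (F₀ x - F₀ (x - 1)))
      = (1/3 - 5/3*E + 11/3*E^2 - 14/3*E^3 + 11/3*E^4 - 5/3*E^5 + 1/3*E^6)/K := by
    rw [intervalIntegral.integral_congr key2, aux_integ]
    norm_num [Real.exp_zero]
    rw [e1', e2, e3, e4, e6, ha2, hb2, hc2, hd2, hKdef]
    field_simp
    ring
  have v3 : (∫ x in (2:ℝ)..3, θ x ^ 2 * (F₀ x - F₀ (x - 1)))
      = (1/6 + 1/3*E - 7/3*E^2 + 4/3*E^3 - 35/6*E^4 + 7/3*E^5)/K := by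
    rw [intervalIntegral.integral_congr key3, aux_integ]
    norm_num [Real.exp_zero]
    rw [e2, e3, e4, e6, e9, ha3, hb3, hc3, hd3, hKdef]
    field_simp
    ring
  rw [hsplit, v1, v2, v3]
  have htot : (7/3*E + 13/6*E^2 + 4/3*E^3 - 7/3*E^4 + 1/3*E^5 + 1/6*E^6)/K
      + ((1/3 - 5/3*E + 11/3*E^2 - 14/3*E^3 + 11/3*E^4 - 5/3*E^5 + 1/3*E^6)/K
      + (1/6 + 1/3*E - 7/3*E^2 + 4/3*E^3 - 35/6*E^4 + 7/3*E^5)/K)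
      = (1/2 + E + 7/2*E^2 - 2*E^3 - 9/2*E^4 + E^5 + 1/2*E^6)/K := by
    rw [← add_div, ← add_div]
    congr 1
    ring
  rw [htot, hKdef]
  exact aux_num E exp_one_gt_d9 exp_one_lt_d9
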